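/- Let K be an abstract simplicial complex on vertex set {1,…,n} and let k ≥ 1 be such that K has at least one k-face. Then the largest eigenvalue of the k-th combinatorial Laplacian satisfies λ_max(Δ_k) ≥ δ_k + k + 1, where δ_k is the maximum up-degree over all k-faces of K. -/

import Mathlib

open Matrix

/-- An abstract simplicial complex on vertex set `Fin n`: a family of nonempty finite subsets
closed under taking nonempty subsets. -/
def IsSimplicialComplex {n : ℕ} (K : Finset (Finset (Fin n))) : Prop :=
  (∀ A ∈ K, A.Nonempty) ∧ ∀ A ∈ K, ∀ B ⊆ A, B.Nonempty → B ∈ K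

/-- The faces of `K` of cardinality `c`; the `k`-faces are those of cardinality `k + 1`. -/
def FaceC {n : ℕ} (K : Finset (Finset (Fin n))) (c : ℕ) : Type :=
  {A : Finset (Fin n) // A ∈ K ∧ A.card = c}

instance {n : ℕ} (K : Finset (Finset (Fin n))) (c : ℕ) : Fintype (FaceC K c) := by
  unfold FaceC; infer_instance

instance {n : ℕ} (K : Finset (Finset (Fin n))) (c : ℕ) : DecidableEq (FaceC K c) := by
  unfold FaceC; infer_instance

/-- The boundary operator `∂` as a matrix sending faces of cardinality `c + 1` to faces of
cardinality `c`: the face obtained by deleting the `ℓ`-th smallest vertex gets sign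
`(-1)^(ℓ-1)`. -/
noncomputable def bdry {n : ℕ} (K : Finset (Finset (Fin n))) (c : ℕ) :
    Matrix (FaceC K c) (FaceC K (c + 1)) ℝ :=
  fun B A =>
    if B.1 ⊆ A.1 then
      ∑ v ∈ A.1 \ B.1, (-1 : ℝ) ^ (A.1.filter (fun u => u < v)).card
    else 0

/-- The `k`-th combinatorial CombLaplacian `Δ_k = ∂_k^T ∂_k + ∂_{k+1} ∂_{k+1}^T`,
indexed by the `k`-faces (which have cardinality `k + 1`). -/
noncomputable def CombLaplacian {n : ℕ} (K : Finset (Finset (Fin n))) (k : ℕ) :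
    Matrix (FaceC K (k + 1)) (FaceC K (k + 1)) ℝ :=
  (bdry K k)ᵀ * bdry K k + bdry K (k + 1) * (bdry K (k + 1))ᵀ

/-- The up-degree of a `k`-face `A`: the number of `(k+1)`-faces of `K` containing `A`. -/
def upDegree {n : ℕ} (K : Finset (Finset (Fin n))) (k : ℕ) (A : Finset (Fin n)) : ℕ :=
  (K.filter fun B => A ⊆ B ∧ B.card = k + 2).card

/-- Two distinct `k`-faces are down-up neighbors if their symmetric difference has
cardinality `2`. -/
def DownUpNbr {n : ℕ} (A B : Finset (Fin n)) : Prop :=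
  A ≠ B ∧ ((A \ B) ∪ (B \ A)).card = 2

/-- Down-up neighboring `k`-faces `A`, `B` are additionally up-down neighbors if `A ∪ B`
is a `(k+1)`-face of `K`. -/
def UpDownNbr {n : ℕ} (K : Finset (Finset (Fin n))) (k : ℕ) (A B : Finset (Fin n)) : Prop :=
  DownUpNbr A B ∧ (A ∪ B) ∈ K ∧ (A ∪ B).card = k + 2


lemma diag_le_iSup_eigenvalues {ι : Type*} [Fintype ι] [Nonempty ι] [DecidableEq ι]
    {M : Matrix ι ι ℝ} (hM : M.IsHermitian) (i : ι) :
    M i i ≤ ⨆ j, hM.eigenvalues j := by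
  set U : Matrix ι ι ℝ := (hM.eigenvectorUnitary : Matrix ι ι ℝ) with hU
  have hUU : U * star U = 1 := (Matrix.mem_unitaryGroup_iff).mp hM.eigenvectorUnitary.2
  have hrow : ∑ j, U i j ^ 2 = 1 := by
    have := congrArg (fun m : Matrix ι ι ℝ => m i i) hUU
    simpa [Matrix.mul_apply, Matrix.star_apply, sq, Matrix.one_apply] using this
  have hM' : M i i = ∑ j, hM.eigenvalues j * U i j ^ 2 := by
    conv_lhs => rw [hM.spectral_theorem, Unitary.conjStarAlgAut_apply, Matrix.mul_apply]
    simp only [Matrix.mul_diagonal, Matrix.star_apply, Function.comp, RCLike.ofReal_real_eq_id,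
      id_eq, star_trivial, ← hU]
    exact Finset.sum_congr rfl fun j _ => by ring
  rw [hM']
  have hbdd : BddAbove (Set.range hM.eigenvalues) := Set.Finite.bddAbove (Set.finite_range _)
  calc ∑ j, hM.eigenvalues j * U i j ^ 2
      ≤ ∑ j, (⨆ j, hM.eigenvalues j) * U i j ^ 2 := by
        refine Finset.sum_le_sum fun j _ => ?_
        exact mul_le_mul_of_nonneg_right (le_ciSup hbdd j) (sq_nonneg _)
    _ = ⨆ j, hM.eigenvalues j := by rw [← Finset.mul_sum, hrow, mul_one]

lemma bdry_sq {n : ℕ} {K : Finset (Finset (Fin n))} {c : ℕ}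
    (B : FaceC K c) (A : FaceC K (c + 1)) (h : B.1 ⊆ A.1) :
    (bdry K c B A) ^ 2 = 1 := by
  have hc : (A.1 \ B.1).card = 1 := by
    rw [Finset.card_sdiff_of_subset h, A.2.2, B.2.2]; omega
  obtain ⟨v, hv⟩ := Finset.card_eq_one.mp hc
  rw [bdry, if_pos h, hv, Finset.sum_singleton, ← pow_mul, mul_comm, pow_mul]
  simp

lemma bdry_sq_eq_ite {n : ℕ} {K : Finset (Finset (Fin n))} {c : ℕ}
    (B : FaceC K c) (A : FaceC K (c + 1)) :
    (bdry K c B A) ^ 2 = if B.1 ⊆ A.1 then 1 else 0 := by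
  by_cases h : B.1 ⊆ A.1
  · rw [if_pos h, bdry_sq B A h]
  · rw [if_neg h, bdry, if_neg h]; ring

lemma laplacian_diag {n k : ℕ} {K : Finset (Finset (Fin n))} (hK : IsSimplicialComplex K)
    (hk : 1 ≤ k) (A : FaceC K (k + 1)) :
    CombLaplacian K k A A = (upDegree K k A.1 : ℝ) + k + 1 := by
  have hdown : ((bdry K k)ᵀ * bdry K k) A A = (k + 1 : ℝ) := by
    rw [Matrix.mul_apply]
    simp only [Matrix.transpose_apply, ← sq]
    rw [Finset.sum_congr rfl (fun B _ => bdry_sq_eq_ite B A), Finset.sum_boole]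
    have hcard : (Finset.univ.filter fun B : FaceC K k => B.1 ⊆ A.1).card
        = (A.1.powersetCard k).card := by
      apply Finset.card_bij (fun B _ => B.1)
      · intro B hB
        simp only [Finset.mem_filter] at hB
        exact Finset.mem_powersetCard.mpr ⟨hB.2, B.2.2⟩
      · intro B₁ h₁ B₂ h₂ h
        exact Subtype.ext h
      · intro S hS
        rw [Finset.mem_powersetCard] at hS
        have hSne : S.Nonempty := Finset.card_pos.mp (by omega)
        exact ⟨⟨S, hK.2 A.1 A.2.1 S hS.1 hSne, hS.2⟩, Finset.mem_filter.mpr ⟨Finset.mem_univ _, hS.1⟩, rfl⟩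
    rw [hcard, Finset.card_powersetCard, A.2.2]
    simp [Nat.choose_succ_self_right]
  have hup : (bdry K (k + 1) * (bdry K (k + 1))ᵀ) A A = (upDegree K k A.1 : ℝ) := by
    rw [Matrix.mul_apply]
    simp only [Matrix.transpose_apply]
    calc ∑ C : FaceC K (k + 2), bdry K (k+1) A C * bdry K (k+1) A C
        = ∑ C : FaceC K (k + 2), if A.1 ⊆ C.1 then (1:ℝ) else 0 := by
          exact Finset.sum_congr rfl fun C _ => by rw [← sq, bdry_sq_eq_ite]
      _ = ((Finset.univ.filter fun C : FaceC K (k + 2) => A.1 ⊆ C.1).card : ℝ) := by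
          rw [Finset.sum_boole]
      _ = (upDegree K k A.1 : ℝ) := by
          congr 1
          rw [upDegree]
          apply Finset.card_bij (fun C _ => C.1)
          · intro C hC
            simp only [Finset.mem_filter] at hC ⊢
            exact ⟨C.2.1, hC.2, C.2.2⟩
          · intro C₁ h₁ C₂ h₂ h
            exact Subtype.ext h
          · intro S hS
            simp only [Finset.mem_filter] at hS
            exact ⟨⟨S, hS.1, hS.2.2⟩, Finset.mem_filter.mpr ⟨Finset.mem_univ _, hS.2.1⟩, rfl⟩
  rw [CombLaplacian, Matrix.add_apply, hdown, hup]; ring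

/-- For a simplicial complex `K` on `{1,…,n}` and `k ≥ 1` such that `K` has a `k`-face, the
largest eigenvalue of `Δ_k` satisfies `λ_max(Δ_k) ≥ δ_k + k + 1`, where `δ_k` is the maximum
up-degree over all `k`-faces. -/
theorem laplacian_lambdaMax_ge
    {n k : ℕ} (K : Finset (Finset (Fin n))) (hK : IsSimplicialComplex K)
    (hk : 1 ≤ k) (hne : Nonempty (FaceC K (k + 1)))
    (hΔ : (CombLaplacian K k).IsHermitian) :
    ((Finset.univ.sup fun A : FaceC K (k + 1) => upDegree K k A.1 : ℕ) : ℝ) + k + 1 ≤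
      ⨆ i, hΔ.eigenvalues i := by
  haveI := hne
  obtain ⟨A₀, -, hA₀⟩ := Finset.exists_mem_eq_sup Finset.univ Finset.univ_nonempty
    (fun A : FaceC K (k + 1) => upDegree K k A.1)
  calc ((Finset.univ.sup fun A : FaceC K (k + 1) => upDegree K k A.1 : ℕ) : ℝ) + k + 1
      = CombLaplacian K k A₀ A₀ := by rw [laplacian_diag hK hk A₀, hA₀]
    _ ≤ ⨆ i, hΔ.eigenvalues i := diag_le_iSup_eigenvalues hΔ A₀
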